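/- Excluded middle for LTL₃: for every formula φ, ⟦φ⟧₃ T = ↯(Σ^ω ∖ ⟦φ⟧₃ F) and ⟦φ⟧₃ F = ↯(Σ^ω ∖ ⟦φ⟧₃ T). In particular the T and F definitive sets are disjoint but are not set complements of one another; rather, each is the set of definitive prefixes of the complement (within Σ^ω) of the other. -/

import Mathlib

/-- A trace is a finite list of states or an infinite stream of states. -/
def Trace (σ : Type) := List σ ⊕ (ℕ → σ)

namespace Trace

variable {σ : Type}

/-- Concatenation of traces; if the first is infinite, the result is the first. -/
def app : Trace σ → Trace σ → Trace σ
  | Sum.inl l, Sum.inl l' => Sum.inl (l ++ l')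
  | Sum.inl l, Sum.inr s =>
      Sum.inr (fun n => if h : n < l.length then l.get ⟨n, h⟩ else s (n - l.length))
  | Sum.inr s, _ => Sum.inr s

instance : Append (Trace σ) := ⟨app⟩

/-- The empty trace ε. -/
def eps : Trace σ := Sum.inl []

/-- A trace is infinite iff it is a stream. -/
def Inf (t : Trace σ) : Prop := t.isRight

/-- Drop the first state of a trace. -/
def drop1 : Trace σ → Trace σ
  | Sum.inl [] => Sum.inl []
  | Sum.inl (_ :: l) => Sum.inl l
  | Sum.inr s => Sum.inr (fun n => s (n + 1))

/-- Drop the first `n` states of a trace. -/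
def drop (t : Trace σ) (n : ℕ) : Trace σ := drop1^[n] t

/-- The first state of a trace, if any. -/
def head? : Trace σ → Option σ
  | Sum.inl [] => none
  | Sum.inl (a :: _) => some a
  | Sum.inr s => some (s 0)

/-- The set of prefixes of a trace. -/
def pre (t : Trace σ) : Set (Trace σ) := {u | ∃ v, t = u ++ v}

/-- The set of prefixes of traces in a set: ↓X. -/
def preS (X : Set (Trace σ)) : Set (Trace σ) := ⋃ t ∈ X, pre t

/-- The set of extensions of a trace: ↑t. -/
def ext (t : Trace σ) : Set (Trace σ) := {u | ∃ v, u = t ++ v}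

/-- The definitive prefixes of a set of traces: ↯X. -/
def dp (X : Set (Trace σ)) : Set (Trace σ) := {t | ext t ⊆ preS X}

/-- A set of traces is definitive iff it equals its own set of definitive prefixes. -/
def Definitive (X : Set (Trace σ)) : Prop := X = dp X

/-- Definitive union ⩁ of a collection of trace sets. -/
def dUnionS (S : Set (Set (Trace σ))) : Set (Trace σ) := dp (⋃₀ S)

/-- Binary / indexed definitive union. -/
def dUnion (X Y : Set (Trace σ)) : Set (Trace σ) := dp (X ∪ Y)

def dUnionI {ι : Sort*} (X : ι → Set (Trace σ)) : Set (Trace σ) := dp (⋃ i, X i)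

/-- The prepend operation ▷X. -/
def prepend (X : Set (Trace σ)) : Set (Trace σ) := {t | t.drop 1 ∈ X}

/-- Σ^ω, the set of infinite traces. -/
def omegaSet (σ : Type) : Set (Trace σ) := {t | t.Inf}

/-- The first state of a trace, with the empty state as default. -/
def st0 {A : Type} (t : Trace (Set A)) : Set A := (t.head?).getD ∅

end Trace

/-- Syntax of LTL formulae over atomic propositions `A`. -/
inductive LTL (A : Type) where
  | top : LTL A
  | atom : A → LTL A
  | neg : LTL A → LTL A
  | and : LTL A → LTL A → LTL A
  | next : LTL A → LTL A
  | until_ : LTL A → LTL A → LTL A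

namespace LTL

variable {A : Type}

open Trace

/-- Conventional LTL satisfaction on (infinite) traces. -/
def Sat : Trace (Set A) → LTL A → Prop
  | t, .top => True
  | t, .atom a => a ∈ t.st0
  | t, .neg φ => ¬ Sat t φ
  | t, .and φ ψ => Sat t φ ∧ Sat t ψ
  | t, .next φ => Sat (t.drop 1) φ
  | t, .until_ φ ψ => ∃ i, Sat (t.drop i) ψ ∧ ∀ j < i, Sat (t.drop j) φ

/-- Answer-indexed family semantics of conventional LTL (sets of infinite traces). -/
def sem : LTL A → Bool → Set (Trace (Set A))
  | .top, true => omegaSet (Set A)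
  | .top, false => ∅
  | .atom a, true => {t | t.Inf ∧ a ∈ t.st0}
  | .atom a, false => {t | t.Inf ∧ a ∉ t.st0}
  | .neg φ, b => sem φ (!b)
  | .and φ ψ, true => sem φ true ∩ sem ψ true
  | .and φ ψ, false => sem φ false ∪ sem ψ false
  | .next φ, b => {t | t.drop 1 ∈ sem φ b}
  | .until_ φ ψ, true => {t | ∃ k, (∀ i < k, t.drop i ∈ sem φ true) ∧ t.drop k ∈ sem ψ true}
  | .until_ φ ψ, false => {t | ∀ k, (∃ i < k, t.drop i ∈ sem φ false) ∨ t.drop k ∈ sem ψ false}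

/-- Answer-indexed family semantics of LTL₃ (definitive sets of finite-or-infinite traces). -/
def sem3 : LTL A → Bool → Set (Trace (Set A))
  | .top, true => Set.univ
  | .top, false => ∅
  | .atom a, true => dp {t | t ≠ eps ∧ a ∈ t.st0}
  | .atom a, false => dp {t | t ≠ eps ∧ a ∉ t.st0}
  | .neg φ, b => sem3 φ (!b)
  | .and φ ψ, true => sem3 φ true ∩ sem3 ψ true
  | .and φ ψ, false => dUnion (sem3 φ false) (sem3 ψ false)
  | .next φ, b => prepend (sem3 φ b)
  | .until_ φ ψ, true =>
      dUnionI (fun k => (fun X => prepend X ∩ sem3 φ true)^[k] (sem3 ψ true))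
  | .until_ φ ψ, false =>
      ⋂ k, (fun X => dUnion (prepend X) (sem3 φ false))^[k] (sem3 ψ false)

end LTL
section Aux
open Trace LTL

variable {σ : Type}

lemma app_def (t u : Trace σ) : t ++ u = Trace.app t u := rfl

lemma app_eps (t : Trace σ) : t ++ Trace.eps = t := by
  rw [app_def]; cases t <;> simp [Trace.app, Trace.eps] <;> rfl

lemma eps_app (t : Trace σ) : (Trace.eps : Trace σ) ++ t = t := by
  rw [app_def]; cases t <;> simp [Trace.app, Trace.eps] <;> rfl

lemma inf_inr (s : ℕ → σ) : Trace.Inf (Sum.inr s : Trace σ) := by simp [Trace.Inf, Sum.isRight]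
lemma not_inf_inl (l : List σ) : ¬ Trace.Inf (Sum.inl l : Trace σ) := by
  simp [Trace.Inf, Sum.isRight]

lemma inf_app (t v : Trace σ) : Trace.Inf (t ++ v) ↔ Trace.Inf t ∨ Trace.Inf v := by
  rw [app_def]
  cases t <;> cases v <;> simp [Trace.app, Trace.Inf, Sum.isRight]

lemma trace_app_assoc (t u v : Trace σ) : (t ++ u) ++ v = t ++ (u ++ v) := by
  simp only [app_def]
  cases t with
  | inl l =>
    cases u with
    | inl l' =>
      cases v with
      | inl l'' => simp [Trace.app]; rfl
      | inr s =>
        simp only [Trace.app]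
        congr 1
        funext n
        rcases lt_or_ge n l.length with h | h
        · rw [dif_pos (by simp; omega), dif_pos h]
          rw [List.get_eq_getElem, List.get_eq_getElem, List.getElem_append_left h]
        · rcases lt_or_ge n (l.length + l'.length) with h2 | h2
          · rw [dif_pos (by simp; omega), dif_neg (by omega), dif_pos (by omega)]
            rw [List.get_eq_getElem, List.get_eq_getElem, List.getElem_append_right h]
          · rw [dif_neg (by simp; omega), dif_neg (by omega), dif_neg (by omega)]
            congr 1
            simp; omega
    | inr s => simp [Trace.app]; rfl
  | inr s => simp [Trace.app]; rfl

end Aux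
section Aux2
open Trace LTL

variable {σ : Type} {t u v : Trace σ} {X Y : Set (Trace σ)}

lemma mem_omega : t ∈ Trace.omegaSet σ ↔ Trace.Inf t := Iff.rfl

lemma app_of_inf (h : Trace.Inf t) (v : Trace σ) : t ++ v = t := by
  cases t with
  | inl l => exact absurd h (not_inf_inl l)
  | inr s => show Trace.app _ _ = _; cases v <;> rfl

lemma mem_preS : u ∈ Trace.preS X ↔ ∃ x ∈ X, ∃ w, x = u ++ w := by
  simp [Trace.preS, Trace.pre]

lemma mem_dp : t ∈ Trace.dp X ↔ ∀ v, ∃ x ∈ X, ∃ w, x = (t ++ v) ++ w := by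
  constructor
  · intro h v
    exact mem_preS.1 (h ⟨v, rfl⟩)
  · intro h u hu
    obtain ⟨v, rfl⟩ := hu
    exact mem_preS.2 (h v)

lemma inf_mem_dp (h : Trace.Inf t) : t ∈ Trace.dp X ↔ t ∈ X := by
  rw [mem_dp]
  constructor
  · intro hd
    obtain ⟨x, hx, w, hw⟩ := hd Trace.eps
    rw [app_eps, app_of_inf h] at hw
    exact hw ▸ hx
  · intro hx v
    exact ⟨t, hx, Trace.eps, by simp [app_of_inf h, app_eps]⟩

lemma dp_mono (h : X ⊆ Y) : Trace.dp X ⊆ Trace.dp Y := by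
  intro t ht
  rw [mem_dp] at ht ⊢
  intro v
  obtain ⟨x, hx, w, hw⟩ := ht v
  exact ⟨x, h hx, w, hw⟩

def constTr (σ : Type) [Inhabited σ] : Trace σ := Sum.inr (fun _ => default)

lemma mem_dp_iff_inf [Inhabited σ] (hX : X ⊆ Trace.omegaSet σ) :
    t ∈ Trace.dp X ↔ ∀ v, Trace.Inf (t ++ v) → t ++ v ∈ X := by
  rw [mem_dp]
  constructor
  · intro h v hv
    obtain ⟨x, hx, w, hw⟩ := h v
    rw [app_of_inf hv] at hw
    exact hw ▸ hx
  · intro h v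
    refine ⟨t ++ (v ++ constTr σ), ?_, constTr σ, (trace_app_assoc t v (constTr σ)).symm⟩
    apply h
    rw [inf_app, inf_app]
    exact Or.inr (Or.inr (inf_inr _))

lemma sub_dp_self (hX : X ⊆ Trace.omegaSet σ) : X ⊆ Trace.dp X := fun x hx =>
  (inf_mem_dp (hX hx)).2 hx

lemma dp_inter [Inhabited σ] (hX : X ⊆ Trace.omegaSet σ) (hY : Y ⊆ Trace.omegaSet σ) :
    Trace.dp X ∩ Trace.dp Y = Trace.dp (X ∩ Y) := by
  ext t
  rw [Set.mem_inter_iff, mem_dp_iff_inf hX, mem_dp_iff_inf hY,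
    mem_dp_iff_inf (fun x hx => hX hx.1)]
  constructor
  · rintro ⟨h1, h2⟩ v hv; exact ⟨h1 v hv, h2 v hv⟩
  · intro h; exact ⟨fun v hv => (h v hv).1, fun v hv => (h v hv).2⟩

lemma dp_union_dp [Inhabited σ] (hX : X ⊆ Trace.omegaSet σ) (hY : Y ⊆ Trace.omegaSet σ) :
    Trace.dp (Trace.dp X ∪ Trace.dp Y) = Trace.dp (X ∪ Y) := by
  apply Set.Subset.antisymm
  · intro t ht
    rw [mem_dp_iff_inf (fun x hx => hx.elim (fun h => hX h) fun h => hY h)]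
    intro v hv
    rw [mem_dp] at ht
    obtain ⟨x, hx, w, hw⟩ := ht v
    rw [app_of_inf hv] at hw
    subst hw
    rcases hx with h | h
    · exact Or.inl ((inf_mem_dp hv).1 h)
    · exact Or.inr ((inf_mem_dp hv).1 h)
  · exact dp_mono (Set.union_subset_union (sub_dp_self hX) (sub_dp_self hY))

lemma dp_iUnion_dp [Inhabited σ] {X : ℕ → Set (Trace σ)} (hX : ∀ k, X k ⊆ Trace.omegaSet σ) :
    Trace.dp (⋃ k, Trace.dp (X k)) = Trace.dp (⋃ k, X k) := by
  apply Set.Subset.antisymm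
  · intro t ht
    rw [mem_dp_iff_inf (Set.iUnion_subset hX)]
    intro v hv
    rw [mem_dp] at ht
    obtain ⟨x, hx, w, hw⟩ := ht v
    rw [app_of_inf hv] at hw
    subst hw
    obtain ⟨k, hk⟩ := Set.mem_iUnion.1 hx
    exact Set.mem_iUnion.2 ⟨k, (inf_mem_dp hv).1 hk⟩
  · exact dp_mono (Set.iUnion_mono fun k => sub_dp_self (hX k))

lemma dp_iInter [Inhabited σ] {X : ℕ → Set (Trace σ)} (hX : ∀ k, X k ⊆ Trace.omegaSet σ) :
    (⋂ k, Trace.dp (X k)) = Trace.dp (⋂ k, X k) := by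
  ext t
  simp only [Set.mem_iInter]
  rw [mem_dp_iff_inf (fun x hx => hX 0 (Set.mem_iInter.1 hx 0))]
  constructor
  · intro h v hv
    exact Set.mem_iInter.2 fun k => (mem_dp_iff_inf (hX k)).1 (h k) v hv
  · intro h k
    rw [mem_dp_iff_inf (hX k)]
    intro v hv
    exact Set.mem_iInter.1 (h v hv) k

end Aux2
section Aux3
open Trace LTL

variable {σ : Type} {t u v : Trace σ} {X Y : Set (Trace σ)}

def consTr (a : σ) (s : ℕ → σ) : Trace σ := Sum.inr (fun n => Nat.casesOn n a s)

lemma drop_one (t : Trace σ) : t.drop 1 = Trace.drop1 t := rfl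
lemma drop_zero (t : Trace σ) : t.drop 0 = t := rfl
lemma drop_succ (t : Trace σ) (n : ℕ) : t.drop (n + 1) = (Trace.drop1 t).drop n :=
  Function.iterate_succ_apply Trace.drop1 n t

lemma inf_drop1 : Trace.Inf (Trace.drop1 t) ↔ Trace.Inf t := by
  rcases t with (_ | ⟨a, l⟩) | s <;> simp [Trace.drop1, Trace.Inf, Sum.isRight]

lemma inf_drop (n : ℕ) : Trace.Inf (t.drop n) ↔ Trace.Inf t := by
  induction n generalizing t with
  | zero => rfl
  | succ n ih => rw [drop_succ]; rw [ih, inf_drop1]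

lemma inr_ne_eps (s : ℕ → σ) : (Sum.inr s : Trace σ) ≠ Trace.eps := by
  simp [Trace.eps]

lemma inf_ne_eps (h : Trace.Inf t) : t ≠ Trace.eps := by
  rcases t with l | s
  · exact absurd h (not_inf_inl l)
  · exact inr_ne_eps s

lemma drop1_consTr (a : σ) (s : ℕ → σ) : Trace.drop1 (consTr a s) = Sum.inr s := rfl

lemma inf_consTr (a : σ) (s : ℕ → σ) : Trace.Inf (consTr a s) := inf_inr _

lemma drop1_app (h : t ≠ Trace.eps) (v : Trace σ) :
    Trace.drop1 (t ++ v) = Trace.drop1 t ++ v := by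
  rcases t with (_ | ⟨a, l⟩) | s
  · exact absurd rfl h
  · rcases v with l' | s'
    · rfl
    · show Trace.drop1 (Trace.app _ _) = Trace.app _ _
      simp only [Trace.app, Trace.drop1]
      congr 1
      funext n
      rcases lt_or_ge n l.length with h1 | h1
      · rw [dif_pos (by simpa using Nat.succ_lt_succ h1), dif_pos h1]
        rfl
      · rw [dif_neg (by simp; omega), dif_neg (by omega)]
        congr 1
        simp
  · rw [app_of_inf (inf_inr s), app_def]
    rcases v with l' | s' <;> rfl

lemma head?_app (h : t ≠ Trace.eps) (v : Trace σ) : (t ++ v).head? = t.head? := by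
  rcases t with (_ | ⟨a, l⟩) | s
  · exact absurd rfl h
  · rcases v with l' | s'
    · rfl
    · show Trace.head? (Trace.app _ _) = _; simp only [Trace.app, Trace.head?]
      rw [dif_pos (by simp)]
      rfl
  · rw [app_of_inf (inf_inr s)]

lemma preS_trans (hu : u ∈ Trace.preS X) (hXY : X ⊆ Trace.preS Y) : u ∈ Trace.preS Y := by
  obtain ⟨x, hx, w, hw⟩ := mem_preS.1 hu
  obtain ⟨y, hy, w', hw'⟩ := mem_preS.1 (hXY hx)
  exact mem_preS.2 ⟨y, hy, w ++ w', by rw [hw', hw, trace_app_assoc]⟩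

lemma dp_eq_of (hXY : X ⊆ Trace.preS Y) (hYX : Y ⊆ Trace.preS X) :
    Trace.dp X = Trace.dp Y := by
  ext t
  constructor
  · intro ht u hu
    exact preS_trans (ht hu) hXY
  · intro ht u hu
    exact preS_trans (ht hu) hYX

lemma self_mem_preS (h : t ∈ X) : t ∈ Trace.preS X :=
  mem_preS.2 ⟨t, h, Trace.eps, (app_eps t).symm⟩

lemma prepend_dp [Inhabited σ] (hX : X ⊆ Trace.omegaSet σ) :
    Trace.prepend (Trace.dp X) = Trace.dp {t | Trace.drop1 t ∈ X} := by
  have hW : {t : Trace σ | Trace.drop1 t ∈ X} ⊆ Trace.omegaSet σ := by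
    intro t ht
    exact mem_omega.2 (inf_drop1.1 (mem_omega.1 (hX ht)))
  ext t
  simp only [Trace.prepend, Set.mem_setOf_eq, drop_one]
  rw [mem_dp_iff_inf hX, mem_dp_iff_inf hW]
  by_cases h : t = Trace.eps
  · subst h
    have hd : Trace.drop1 (Trace.eps : Trace σ) = Trace.eps := rfl
    simp only [hd, Set.mem_setOf_eq, eps_app]
    constructor
    · intro hh v hv
      exact hh (Trace.drop1 v) (inf_drop1.2 hv)
    · intro hh w hw
      rcases w with l | s
      · exact absurd hw (not_inf_inl l)
      · exact drop1_consTr default s ▸ hh (consTr default s) (inf_consTr _ _)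
  · constructor
    · intro hh v hv
      simp only [Set.mem_setOf_eq, drop1_app h]
      apply hh
      rw [inf_app] at hv ⊢
      rcases hv with hv | hv
      · exact Or.inl (inf_drop1.2 hv)
      · exact Or.inr hv
    · intro hh w hw
      have hw' : Trace.Inf (t ++ w) := by
        rw [inf_app] at hw ⊢
        rcases hw with hw | hw
        · exact Or.inl (inf_drop1.1 hw)
        · exact Or.inr hw
      have := hh w hw'
      simpa only [Set.mem_setOf_eq, drop1_app h] using this

end Aux3
section Aux4
open Trace LTL

variable {A : Type}

lemma sem_sub_omega (φ : LTL A) : ∀ b, LTL.sem φ b ⊆ Trace.omegaSet (Set A) := by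
  induction φ with
  | top =>
    intro b
    cases b
    · exact fun t ht => absurd ht (Set.notMem_empty t)
    · exact fun t ht => ht
  | atom a =>
    intro b
    cases b <;> exact fun t ht => ht.1
  | neg φ ih => intro b; exact ih (!b)
  | and φ ψ ih1 ih2 =>
    intro b
    cases b
    · exact Set.union_subset (ih1 false) (ih2 false)
    · exact fun t ht => ih1 true ht.1
  | next φ ih =>
    intro b t ht
    exact mem_omega.2 ((inf_drop 1).1 (mem_omega.1 (ih b ht)))
  | until_ φ ψ ih1 ih2 =>
    intro b t ht
    cases b
    · rcases ht 0 with ⟨i, hi, _⟩ | h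
      · omega
      · exact mem_omega.2 ((inf_drop 0).1 (mem_omega.1 (ih2 false h)))
    · obtain ⟨k, _, hk⟩ := ht
      exact mem_omega.2 ((inf_drop k).1 (mem_omega.1 (ih2 true hk)))

lemma sem_spec (φ : LTL A) : ∀ t : Trace (Set A), t.Inf →
    (t ∈ LTL.sem φ true ↔ LTL.Sat t φ) ∧ (t ∈ LTL.sem φ false ↔ ¬ LTL.Sat t φ) := by
  induction φ with
  | top =>
    intro t ht
    exact ⟨⟨fun _ => trivial, fun _ => ht⟩,
      ⟨fun h => absurd h (Set.notMem_empty t), fun h => absurd trivial h⟩⟩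
  | atom a =>
    intro t ht
    exact ⟨⟨fun h => h.2, fun h => ⟨ht, h⟩⟩, ⟨fun h hs => h.2 hs, fun h => ⟨ht, h⟩⟩⟩
  | neg φ ih =>
    intro t ht
    refine ⟨(ih t ht).2, ?_⟩
    show t ∈ LTL.sem φ true ↔ ¬¬ LTL.Sat t φ
    rw [not_not]
    exact (ih t ht).1
  | and φ ψ ih1 ih2 =>
    intro t ht
    constructor
    · show t ∈ LTL.sem φ true ∩ LTL.sem ψ true ↔ _
      rw [Set.mem_inter_iff, (ih1 t ht).1, (ih2 t ht).1]
      rfl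
    · show t ∈ LTL.sem φ false ∪ LTL.sem ψ false ↔ _
      rw [Set.mem_union, (ih1 t ht).2, (ih2 t ht).2]
      show _ ↔ ¬(LTL.Sat t φ ∧ LTL.Sat t ψ)
      rw [not_and_or]
  | next φ ih =>
    intro t ht
    have h1 : (t.drop 1).Inf := (inf_drop 1).2 ht
    exact ⟨(ih _ h1).1, (ih _ h1).2⟩
  | until_ φ ψ ih1 ih2 =>
    intro t ht
    have hd : ∀ n, (t.drop n).Inf := fun n => (inf_drop n).2 ht
    constructor
    · constructor
      · rintro ⟨k, hφ, hψ⟩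
        exact ⟨k, (ih2 _ (hd k)).1.1 hψ, fun j hj => (ih1 _ (hd j)).1.1 (hφ j hj)⟩
      · rintro ⟨k, hψ, hφ⟩
        exact ⟨k, fun j hj => (ih1 _ (hd j)).1.2 (hφ j hj), (ih2 _ (hd k)).1.2 hψ⟩
    · constructor
      · rintro h ⟨k, hψ, hφ⟩
        rcases h k with ⟨i, hi, hf⟩ | hf
        · exact (ih1 _ (hd i)).2.1 hf (hφ i hi)
        · exact (ih2 _ (hd k)).2.1 hf hψ
      · intro h k
        by_cases hc : ∀ j < k, LTL.Sat (t.drop j) φ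
        · refine Or.inr ((ih2 _ (hd k)).2.2 fun hs => h ⟨k, hs, hc⟩)
        · push_neg at hc
          obtain ⟨i, hi, hn⟩ := hc
          exact Or.inl ⟨i, hi, (ih1 _ (hd i)).2.2 hn⟩

lemma sem_true_eq (φ : LTL A) :
    LTL.sem φ true = Trace.omegaSet (Set A) \ LTL.sem φ false := by
  ext t
  constructor
  · intro h
    have ht := sem_sub_omega φ true h
    exact ⟨ht, fun hf => (sem_spec φ t ht).2.1 hf ((sem_spec φ t ht).1.1 h)⟩
  · rintro ⟨ht, hf⟩
    exact (sem_spec φ t ht).1.2 (not_not.1 fun hn => hf ((sem_spec φ t ht).2.2 hn))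

lemma sem_false_eq (φ : LTL A) :
    LTL.sem φ false = Trace.omegaSet (Set A) \ LTL.sem φ true := by
  ext t
  constructor
  · intro h
    have ht := sem_sub_omega φ false h
    exact ⟨ht, fun hf => (sem_spec φ t ht).2.1 h ((sem_spec φ t ht).1.1 hf)⟩
  · rintro ⟨ht, hf⟩
    exact (sem_spec φ t ht).2.2 fun hs => hf ((sem_spec φ t ht).1.2 hs)

end Aux4
section Aux5
open Trace LTL

variable {A : Type}

instance : Inhabited (Set A) := ⟨∅⟩

lemma st0_app {t : Trace (Set A)} (h : t ≠ Trace.eps) (v : Trace (Set A)) :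
    (t ++ v).st0 = t.st0 := by
  unfold Trace.st0
  rw [head?_app h]

lemma sem3_eq (φ : LTL A) : ∀ b, LTL.sem3 φ b = Trace.dp (LTL.sem φ b) := by
  induction φ with
  | top =>
    intro b
    cases b
    · apply Set.Subset.antisymm (Set.empty_subset _)
      intro t ht
      obtain ⟨x, hx, -⟩ := mem_dp.1 ht Trace.eps
      exact hx.elim
    · apply Set.Subset.antisymm _ (Set.subset_univ _)
      intro t _
      rw [mem_dp]
      intro v
      exact ⟨(t ++ v) ++ constTr (Set A), mem_omega.2 (by rw [inf_app]; exact Or.inr (inf_inr _)),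
        constTr (Set A), rfl⟩
  | atom a =>
    intro b
    have key : ∀ P : Trace (Set A) → Prop, (∀ t v, t ≠ Trace.eps → (P t ↔ P (t ++ v))) →
        Trace.dp {t | t ≠ Trace.eps ∧ P t} = Trace.dp {t | t.Inf ∧ P t} := by
      intro P hP
      apply dp_eq_of
      · rintro x ⟨hne, hPx⟩
        exact mem_preS.2 ⟨x ++ constTr (Set A),
          ⟨(inf_app _ _).2 (Or.inr (inf_inr _)), (hP x _ hne).1 hPx⟩, constTr (Set A), rfl⟩
      · rintro y ⟨hy, hPy⟩
        exact self_mem_preS ⟨inf_ne_eps hy, hPy⟩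
    cases b
    · exact key _ (fun t v h => by rw [st0_app h])
    · exact key _ (fun t v h => by rw [st0_app h])
  | neg φ ih => intro b; exact ih (!b)
  | and φ ψ ih1 ih2 =>
    intro b
    cases b
    · show Trace.dUnion (LTL.sem3 φ false) (LTL.sem3 ψ false) = _
      rw [Trace.dUnion, ih1 false, ih2 false,
        dp_union_dp (sem_sub_omega φ false) (sem_sub_omega ψ false)]
      rfl
    · show LTL.sem3 φ true ∩ LTL.sem3 ψ true = _
      rw [ih1 true, ih2 true, dp_inter (sem_sub_omega φ true) (sem_sub_omega ψ true)]
      rfl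
  | next φ ih =>
    intro b
    show Trace.prepend (LTL.sem3 φ b) = _
    rw [ih b, prepend_dp (sem_sub_omega φ b)]
    refine congrArg Trace.dp (Set.ext fun t => ?_)
    show Trace.drop1 t ∈ LTL.sem φ b ↔ t.drop 1 ∈ LTL.sem φ b
    rw [drop_one]
  | until_ φ ψ ih1 ih2 =>
    intro b
    cases b
    · -- false case
      show (⋂ k, (fun X => Trace.dUnion (Trace.prepend X) (LTL.sem3 φ false))^[k]
        (LTL.sem3 ψ false)) = _
      set V : ℕ → Set (Trace (Set A)) := fun k =>
        {t | (∃ i < k, t.drop i ∈ LTL.sem φ false) ∨ t.drop k ∈ LTL.sem ψ false} with hV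
      have hVsub : ∀ k, V k ⊆ Trace.omegaSet (Set A) := by
        rintro k t (⟨i, _, h⟩ | h)
        · exact mem_omega.2 ((inf_drop i).1 (mem_omega.1 (sem_sub_omega φ false h)))
        · exact mem_omega.2 ((inf_drop k).1 (mem_omega.1 (sem_sub_omega ψ false h)))
      have hit : ∀ k, (fun X => Trace.dUnion (Trace.prepend X) (LTL.sem3 φ false))^[k]
          (LTL.sem3 ψ false) = Trace.dp (V k) := by
        intro k
        induction k with
        | zero =>
          rw [Function.iterate_zero_apply, ih2 false]
          refine congrArg Trace.dp (Set.ext fun t => ?_)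
          simp only [hV, Set.mem_setOf_eq, drop_zero]
          constructor
          · exact fun h => Or.inr h
          · rintro (⟨i, hi, -⟩ | h)
            · omega
            · exact h
        | succ k ihk =>
          rw [Function.iterate_succ_apply', ihk]
          show Trace.dUnion (Trace.prepend (Trace.dp (V k))) (LTL.sem3 φ false) = _
          have hW : {t : Trace (Set A) | Trace.drop1 t ∈ V k} ⊆ Trace.omegaSet (Set A) :=
            fun t ht => mem_omega.2 (inf_drop1.1 (mem_omega.1 (hVsub k ht)))
          rw [Trace.dUnion, prepend_dp (hVsub k), ih1 false,
            dp_union_dp hW (sem_sub_omega φ false)]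
          refine congrArg Trace.dp (Set.ext fun t => ?_)
          simp only [hV, Set.mem_union, Set.mem_setOf_eq]
          constructor
          · rintro ((⟨i, hi, hf⟩ | h) | h)
            · exact Or.inl ⟨i + 1, by omega, by rwa [drop_succ]⟩
            · exact Or.inr (by rwa [drop_succ])
            · exact Or.inl ⟨0, by omega, by rwa [drop_zero]⟩
          · rintro (⟨i, hi, hf⟩ | h)
            · match i with
              | 0 => exact Or.inr (by rwa [drop_zero] at hf)
              | i + 1 => exact Or.inl (Or.inl ⟨i, by omega, by rwa [drop_succ] at hf⟩)
            · exact Or.inl (Or.inr (by rwa [drop_succ] at h))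
      calc (⋂ k, (fun X => Trace.dUnion (Trace.prepend X) (LTL.sem3 φ false))^[k]
              (LTL.sem3 ψ false))
          = ⋂ k, Trace.dp (V k) := Set.iInter_congr hit
        _ = Trace.dp (⋂ k, V k) := dp_iInter hVsub
        _ = _ := by
            refine congrArg Trace.dp (Set.ext fun t => ?_)
            rw [Set.mem_iInter]
            exact Iff.rfl
    · -- true case
      show Trace.dUnionI (fun k => (fun X => Trace.prepend X ∩ LTL.sem3 φ true)^[k]
        (LTL.sem3 ψ true)) = _
      set U : ℕ → Set (Trace (Set A)) := fun k =>
        {t | (∀ i < k, t.drop i ∈ LTL.sem φ true) ∧ t.drop k ∈ LTL.sem ψ true} with hU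
      have hUsub : ∀ k, U k ⊆ Trace.omegaSet (Set A) := by
        rintro k t ⟨-, h⟩
        exact mem_omega.2 ((inf_drop k).1 (mem_omega.1 (sem_sub_omega ψ true h)))
      have hit : ∀ k, (fun X => Trace.prepend X ∩ LTL.sem3 φ true)^[k]
          (LTL.sem3 ψ true) = Trace.dp (U k) := by
        intro k
        induction k with
        | zero =>
          rw [Function.iterate_zero_apply, ih2 true]
          refine congrArg Trace.dp (Set.ext fun t => ?_)
          simp only [hU, Set.mem_setOf_eq, drop_zero]
          constructor
          · exact fun h => ⟨fun i hi => by omega, h⟩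
          · exact fun h => h.2
        | succ k ihk =>
          rw [Function.iterate_succ_apply', ihk]
          show Trace.prepend (Trace.dp (U k)) ∩ LTL.sem3 φ true = _
          have hW : {t : Trace (Set A) | Trace.drop1 t ∈ U k} ⊆ Trace.omegaSet (Set A) :=
            fun t ht => mem_omega.2 (inf_drop1.1 (mem_omega.1 (hUsub k ht)))
          rw [prepend_dp (hUsub k), ih1 true, dp_inter hW (sem_sub_omega φ true)]
          refine congrArg Trace.dp (Set.ext fun t => ?_)
          simp only [hU, Set.mem_inter_iff, Set.mem_setOf_eq]
          constructor
          · rintro ⟨⟨hφs, hψs⟩, hf⟩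
            refine ⟨?_, by rwa [drop_succ]⟩
            intro i hi
            match i with
            | 0 => rwa [drop_zero]
            | i + 1 => rw [drop_succ]; exact hφs i (by omega)
          · rintro ⟨hφs, hψs⟩
            exact ⟨⟨fun i hi => by rw [← drop_succ]; exact hφs (i + 1) (by omega),
              by rwa [← drop_succ]⟩, by have := hφs 0 (by omega); rwa [drop_zero] at this⟩
      calc Trace.dUnionI (fun k => (fun X => Trace.prepend X ∩ LTL.sem3 φ true)^[k]
              (LTL.sem3 ψ true))
          = Trace.dp (⋃ k, Trace.dp (U k)) :=
            congrArg Trace.dp (Set.iUnion_congr hit)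
        _ = Trace.dp (⋃ k, U k) := dp_iUnion_dp hUsub
        _ = _ := by
            refine congrArg Trace.dp (Set.ext fun t => ?_)
            rw [Set.mem_iUnion]
            exact Iff.rfl

end Aux5
theorem sem3_excluded_middle {A : Type} (φ : LTL A) :
    LTL.sem3 φ true = Trace.dp (Trace.omegaSet (Set A) \ LTL.sem3 φ false) ∧
    LTL.sem3 φ false = Trace.dp (Trace.omegaSet (Set A) \ LTL.sem3 φ true) ∧
    Disjoint (LTL.sem3 φ true) (LTL.sem3 φ false) := by
  have hT := sem3_eq φ true
  have hF := sem3_eq φ false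
  refine ⟨?_, ?_, ?_⟩
  · rw [hT, hF]
    refine congrArg Trace.dp ?_
    rw [sem_true_eq φ]
    ext t
    constructor
    · rintro ⟨ht, hf⟩
      exact ⟨ht, fun h => hf ((inf_mem_dp (mem_omega.1 ht)).1 h)⟩
    · rintro ⟨ht, hf⟩
      exact ⟨ht, fun h => hf ((inf_mem_dp (mem_omega.1 ht)).2 h)⟩
  · rw [hT, hF]
    refine congrArg Trace.dp ?_
    rw [sem_false_eq φ]
    ext t
    constructor
    · rintro ⟨ht, hf⟩
      exact ⟨ht, fun h => hf ((inf_mem_dp (mem_omega.1 ht)).1 h)⟩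
    · rintro ⟨ht, hf⟩
      exact ⟨ht, fun h => hf ((inf_mem_dp (mem_omega.1 ht)).2 h)⟩
  · rw [Set.disjoint_left]
    intro t h1 h2
    rw [hT] at h1
    rw [hF] at h2
    have hinf : Trace.Inf (t ++ constTr (Set A)) := (inf_app _ _).2 (Or.inr (inf_inr _))
    have h1' := (mem_dp_iff_inf (sem_sub_omega φ true)).1 h1 (constTr (Set A)) hinf
    have h2' := (mem_dp_iff_inf (sem_sub_omega φ false)).1 h2 (constTr (Set A)) hinf
    exact (sem_spec φ _ hinf).2.1 h2' ((sem_spec φ _ hinf).1.1 h1')
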